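/- Let c > 0 be real and let (K_L) be a sequence of integers with K_L ≥ 2 and K_L/L → c as L → ∞. Then s*(K_L, L) → 1/(c·(e^{1/c} − 1)) as L → ∞. -/

import Mathlib

/-- The subgame-perfect Nash equilibrium offer of the Multi-Proposer-Multi-Responder
Ultimatum Game with `K` proposers and `L` responders. -/
noncomputable def sstar (K L : ℕ) : ℝ :=
  ((L:ℝ) * ((K:ℝ) - 1)^L) /
    ((K:ℝ)^(L+1) - ((K:ℝ) - 1)^(L-1) * (((K:ℝ) - 1) * (K:ℝ) + (L:ℝ)))

private lemma aux_div_scale (N D a : ℝ) (ha : a ≠ 0) : N / D = (N / a) / (D / a) := by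
  rw [div_div_div_cancel_right₀]
  exact ha

theorem stmt17 (c : ℝ) (hc : 0 < c) (K : ℕ → ℕ) (hK : ∀ L, 2 ≤ K L)
    (hlim : Filter.Tendsto (fun L : ℕ => (K L : ℝ) / (L:ℝ)) Filter.atTop (nhds c)) :
    Filter.Tendsto (fun L : ℕ => sstar (K L) L) Filter.atTop
      (nhds (1 / (c * (Real.exp (1/c) - 1)))) := by
  open Filter Real in
  have hKpos : ∀ L, (0:ℝ) < K L := fun L => by
    have := hK L; positivity
  have hK2 : ∀ L, (2:ℝ) ≤ (K L : ℝ) := fun L => by exact_mod_cast hK L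
  have hf_pos : ∀ L, (0:ℝ) < 1 - 1/(K L:ℝ) := by
    intro L
    have h2 := hK2 L
    have : 1/(K L:ℝ) ≤ 1/2 := by
      apply one_div_le_one_div_of_le <;> linarith
    linarith
  have hKtop : Tendsto (fun L : ℕ => (K L:ℝ)) atTop atTop := by
    apply Tendsto.congr' _ ((tendsto_natCast_atTop_atTop (R := ℝ)).atTop_mul_pos hc hlim)
    filter_upwards [eventually_ge_atTop 1] with L hL
    have hL0 : (L:ℝ) ≠ 0 := by
      have : (1:ℝ) ≤ (L:ℝ) := by exact_mod_cast hL
      linarith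
    field_simp
  have hinvK : Tendsto (fun L : ℕ => 1/(K L:ℝ)) atTop (nhds 0) := by
    simp only [one_div]
    exact tendsto_inv_atTop_zero.comp hKtop
  have hLK : Tendsto (fun L : ℕ => (L:ℝ)/(K L:ℝ)) atTop (nhds c⁻¹) := by
    have h := hlim.inv₀ hc.ne'
    simpa only [inv_div] using h
  have hmul : Tendsto (fun L : ℕ => (K L:ℝ) * Real.log (1 - 1/(K L:ℝ))) atTop (nhds (-1)) := by
    have h := (Real.tendsto_mul_log_one_add_div_atTop (-1)).comp hKtop
    apply h.congr
    intro L
    simp [Function.comp, neg_div, sub_eq_add_neg]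
  have hLlog : Tendsto (fun L : ℕ => (L:ℝ) * Real.log (1 - 1/(K L:ℝ))) atTop
      (nhds (-(1/c))) := by
    have h := hLK.mul hmul
    have hval : c⁻¹ * (-1) = -(1/c) := by rw [one_div]; ring
    rw [hval] at h
    apply h.congr' _
    filter_upwards with L
    have hk : (K L:ℝ) ≠ 0 := (hKpos L).ne'
    field_simp
  have haL : Tendsto (fun L : ℕ => (1 - 1/(K L:ℝ))^L) atTop (nhds (Real.exp (-(1/c)))) := by
    have h := (Real.continuous_exp.tendsto _).comp hLlog
    apply h.congr
    intro L
    simp only [Function.comp]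
    rw [Real.exp_nat_mul, Real.exp_log (hf_pos L)]
  have hftendsto : Tendsto (fun L : ℕ => (1 - 1/(K L:ℝ))) atTop (nhds 1) := by
    have hone : Tendsto (fun _ : ℕ => (1:ℝ)) atTop (nhds 1) := tendsto_const_nhds
    have h := hone.sub hinvK
    simpa using h
  have hbL : Tendsto (fun L : ℕ => (1 - 1/(K L:ℝ))^(L-1)) atTop
      (nhds (Real.exp (-(1/c)))) := by
    have h := haL.div hftendsto one_ne_zero
    rw [div_one] at h
    apply h.congr'
    filter_upwards [eventually_ge_atTop 1] with L hL
    simp only [Pi.div_apply]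
    rw [pow_sub₀ _ (hf_pos L).ne' hL, pow_one, ← div_eq_mul_inv]
  have hinvL : Tendsto (fun L : ℕ => 1/(L:ℝ)) atTop (nhds 0) :=
    tendsto_one_div_atTop_nhds_zero_nat
  have hden : Tendsto
      (fun L : ℕ => (K L:ℝ)/(L:ℝ) - (1 - 1/(K L:ℝ))^(L-1) * ((K L:ℝ)/(L:ℝ) - 1/(L:ℝ) + 1/(K L:ℝ)))
      atTop (nhds (c - Real.exp (-(1/c)) * (c - 0 + 0))) :=
    hlim.sub (hbL.mul ((hlim.sub hinvL).add hinvK))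
  have hlim0 : c - Real.exp (-(1/c)) * (c - 0 + 0) ≠ 0 := by
    have h1 : Real.exp (-(1/c)) < 1 := Real.exp_lt_one_iff.mpr (neg_lt_zero.mpr (by positivity))
    have h2 : 0 < Real.exp (-(1/c)) := Real.exp_pos _
    nlinarith
  have hmain := haL.div hden hlim0
  have hval : Real.exp (-(1/c)) / (c - Real.exp (-(1/c)) * (c - 0 + 0))
      = 1/(c * (Real.exp (1/c) - 1)) := by
    have he : Real.exp (1/c) ≠ 0 := (Real.exp_pos _).ne'
    have h1 : Real.exp (1/c) - 1 ≠ 0 :=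
      sub_ne_zero.mpr (ne_of_gt (Real.one_lt_exp_iff.mpr (by positivity)))
    rw [div_eq_div_iff hlim0 (mul_ne_zero hc.ne' h1), Real.exp_neg]
    field_simp
    ring
  rw [hval] at hmain
  apply Tendsto.congr' _ hmain
  filter_upwards [eventually_ge_atTop 1] with L hL
  obtain ⟨m, rfl⟩ : ∃ m, L = m + 1 := ⟨L - 1, (Nat.succ_pred_eq_of_pos hL).symm⟩
  simp only [Pi.div_apply]
  set k : ℝ := ((K (m+1) : ℕ) : ℝ) with hkdef
  set l : ℝ := ((m+1 : ℕ) : ℝ) with hldef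
  have hk0 : k ≠ 0 := (hKpos (m+1)).ne'
  have hl0 : l ≠ 0 := by rw [hldef]; positivity
  have ha : l * k^(m+1) ≠ 0 := mul_ne_zero hl0 (pow_ne_zero _ hk0)
  have hfk : (1 - 1/k) = (k - 1)/k := by field_simp
  have key : sstar (K (m+1)) (m+1)
      = (l * (k-1)^(m+1)) / (k^(m+2) - (k-1)^m * ((k-1)*k + l)) := by
    simp only [sstar, Nat.add_sub_cancel]
    rfl
  have hnum : (l * (k-1)^(m+1)) / (l * k^(m+1)) = (1 - 1/k)^(m+1) := by
    rw [mul_div_mul_left _ _ hl0, hfk, div_pow]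
  have hd : (k^(m+2) - (k-1)^m * ((k-1)*k + l)) / (l * k^(m+1))
      = k/l - (1 - 1/k)^((m+1)-1) * (k/l - 1/l + 1/k) := by
    simp only [Nat.add_sub_cancel]
    rw [hfk, div_pow]
    field_simp
    ring
  rw [key, aux_div_scale (l * (k-1)^(m+1)) (k^(m+2) - (k-1)^m * ((k-1)*k + l)) (l * k^(m+1)) ha,
    hnum, hd]
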